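/- For all n ≥ 0, c_1⁵·α^n + c_2⁵·β^n + c_3⁵·γ^n + c_4⁵·δ^n = (1/563²)·X_n, where X_n is the Tetranacci-type sequence with X_0 = 500, X_1 = 1423, X_2 = 2598, X_3 = 4986 and X_n = X_{n−1} + X_{n−2} + X_{n−3} + X_{n−4} for n ≥ 4. -/
import Mathlib


/-- A Tetranacci-type sequence. -/
def seqX : ℕ → ℤ
  | 0 => 500
  | 1 => 1423
  | 2 => 2598
  | 3 => 4986
  | n + 4 => seqX (n + 3) + seqX (n + 2) + seqX (n + 1) + seqX n

theorem tetra_c_fifth (α β γ δ : ℂ)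
    (hα : α ^ 4 - α ^ 3 - α ^ 2 - α - 1 = 0) (hβ : β ^ 4 - β ^ 3 - β ^ 2 - β - 1 = 0)
    (hγ : γ ^ 4 - γ ^ 3 - γ ^ 2 - γ - 1 = 0) (hδ : δ ^ 4 - δ ^ 3 - δ ^ 2 - δ - 1 = 0)
    (hαβ : α ≠ β) (hαγ : α ≠ γ) (hαδ : α ≠ δ) (hβγ : β ≠ γ) (hβδ : β ≠ δ) (hγδ : γ ≠ δ)
    (c₁ c₂ c₃ c₄ : ℂ)
    (hc₁ : c₁ = α ^ 2 / ((α - β) * (α - γ) * (α - δ)))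
    (hc₂ : c₂ = β ^ 2 / ((β - α) * (β - γ) * (β - δ)))
    (hc₃ : c₃ = γ ^ 2 / ((γ - α) * (γ - β) * (γ - δ)))
    (hc₄ : c₄ = δ ^ 2 / ((δ - α) * (δ - β) * (δ - γ))) (n : ℕ) :
    c₁ ^ 5 * α ^ n + c₂ ^ 5 * β ^ n + c₃ ^ 5 * γ ^ n + c₄ ^ 5 * δ ^ n
      = (1 / 563 ^ 2 : ℂ) * seqX n := by
  have n563 : (563 : ℂ) ≠ 0 := by norm_num
  have dαβ : α - β ≠ 0 := sub_ne_zero.mpr hαβ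
  have dαγ : α - γ ≠ 0 := sub_ne_zero.mpr hαγ
  have dαδ : α - δ ≠ 0 := sub_ne_zero.mpr hαδ
  have dβγ : β - γ ≠ 0 := sub_ne_zero.mpr hβγ
  have dβδ : β - δ ≠ 0 := sub_ne_zero.mpr hβδ
  have dγδ : γ - δ ≠ 0 := sub_ne_zero.mpr hγδ
  have dβα : β - α ≠ 0 := sub_ne_zero.mpr hαβ.symm
  have dγα : γ - α ≠ 0 := sub_ne_zero.mpr hαγ.symm
  have dγβ : γ - β ≠ 0 := sub_ne_zero.mpr hβγ.symm
  have dδα : δ - α ≠ 0 := sub_ne_zero.mpr hαδ.symm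
  have dδβ : δ - β ≠ 0 := sub_ne_zero.mpr hβδ.symm
  have dδγ : δ - γ ≠ 0 := sub_ne_zero.mpr hγδ.symm
  -- successive divided differences
  have hGβ : β ^ 3 + (α - 1) * β ^ 2 + (α ^ 2 - α - 1) * β + (α ^ 3 - α ^ 2 - α - 1) = 0 := by
    have h2 : (β - α) * (β ^ 3 + (α - 1) * β ^ 2 + (α ^ 2 - α - 1) * β
        + (α ^ 3 - α ^ 2 - α - 1)) = 0 := by linear_combination hβ - hα
    exact (mul_eq_zero.mp h2).resolve_left dβα
  have hGγ : γ ^ 3 + (α - 1) * γ ^ 2 + (α ^ 2 - α - 1) * γ + (α ^ 3 - α ^ 2 - α - 1) = 0 := by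
    have h2 : (γ - α) * (γ ^ 3 + (α - 1) * γ ^ 2 + (α ^ 2 - α - 1) * γ
        + (α ^ 3 - α ^ 2 - α - 1)) = 0 := by linear_combination hγ - hα
    exact (mul_eq_zero.mp h2).resolve_left dγα
  have hGδ : δ ^ 3 + (α - 1) * δ ^ 2 + (α ^ 2 - α - 1) * δ + (α ^ 3 - α ^ 2 - α - 1) = 0 := by
    have h2 : (δ - α) * (δ ^ 3 + (α - 1) * δ ^ 2 + (α ^ 2 - α - 1) * δ
        + (α ^ 3 - α ^ 2 - α - 1)) = 0 := by linear_combination hδ - hα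
    exact (mul_eq_zero.mp h2).resolve_left dδα
  have hHβγ : β ^ 2 + β * γ + γ ^ 2 + (α - 1) * (β + γ) + α ^ 2 - α - 1 = 0 := by
    have h2 : (β - γ) * (β ^ 2 + β * γ + γ ^ 2 + (α - 1) * (β + γ) + α ^ 2 - α - 1) = 0 := by
      linear_combination hGβ - hGγ
    exact (mul_eq_zero.mp h2).resolve_left dβγ
  have hHβδ : β ^ 2 + β * δ + δ ^ 2 + (α - 1) * (β + δ) + α ^ 2 - α - 1 = 0 := by
    have h2 : (β - δ) * (β ^ 2 + β * δ + δ ^ 2 + (α - 1) * (β + δ) + α ^ 2 - α - 1) = 0 := by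
      linear_combination hGβ - hGδ
    exact (mul_eq_zero.mp h2).resolve_left dβδ
  -- elementary symmetric functions
  have he1 : α + β + γ + δ = 1 := by
    have h2 : (γ - δ) * (α + β + γ + δ - 1) = 0 := by linear_combination hHβγ - hHβδ
    have h3 := (mul_eq_zero.mp h2).resolve_left dγδ
    linear_combination h3
  have he2 : α * β + α * γ + α * δ + β * γ + β * δ + γ * δ = -1 := by
    linear_combination (α + β + γ) * he1 - hHβγ
  have hR1b : (α * β) ^ 2 + (α * β) * ((α + β) - (α + β) ^ 2 + 1) - 1 = 0 := by
    linear_combination hα - α * hGβ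
  have he3 : α * β * γ + α * β * δ + α * γ * δ + β * γ * δ = 1 := by
    linear_combination hGβ + (α * β - (α + β) ^ 2) * he1 + (α + β) * he2
  have he4 : α * β * γ * δ = -1 := by
    linear_combination (α * β) * he2 - (α + β) * (α * β) * he1 - hR1b
  -- power sums
  have hp2 : α ^ 2 + β ^ 2 + γ ^ 2 + δ ^ 2 = 3 := by
    linear_combination (α + β + γ + δ + 1) * he1 - 2 * he2
  have hp3 : α ^ 3 + β ^ 3 + γ ^ 3 + δ ^ 3 = 7 := by
    linear_combination ((α + β + γ + δ) ^ 2 + (α + β + γ + δ) + 4) * he1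
      - 3 * (α + β + γ + δ) * he2 + 3 * he3
  have hp4 : α ^ 4 + β ^ 4 + γ ^ 4 + δ ^ 4 = 15 := by
    linear_combination hα + hβ + hγ + hδ + hp3 + hp2 + he1
  have hp5 : α ^ 5 + β ^ 5 + γ ^ 5 + δ ^ 5 = 26 := by
    linear_combination α * hα + β * hβ + γ * hγ + δ * hδ + hp4 + hp3 + hp2 + he1
  have hp6 : α ^ 6 + β ^ 6 + γ ^ 6 + δ ^ 6 = 51 := by
    linear_combination α ^ 2 * hα + β ^ 2 * hβ + γ ^ 2 * hγ + δ ^ 2 * hδ + hp5 + hp4 + hp3 + hp2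
  -- the denominators equal f'(root)
  have hD1 : (α - β) * (α - γ) * (α - δ) = 4 * α ^ 3 - 3 * α ^ 2 - 2 * α - 1 := by
    linear_combination (-3 * α ^ 2) * he1 + 2 * α * he2 - he3
  have hD2 : (β - α) * (β - γ) * (β - δ) = 4 * β ^ 3 - 3 * β ^ 2 - 2 * β - 1 := by
    linear_combination (-3 * β ^ 2) * he1 + 2 * β * he2 - he3
  have hD3 : (γ - α) * (γ - β) * (γ - δ) = 4 * γ ^ 3 - 3 * γ ^ 2 - 2 * γ - 1 := by
    linear_combination (-3 * γ ^ 2) * he1 + 2 * γ * he2 - he3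
  have hD4 : (δ - α) * (δ - β) * (δ - γ) = 4 * δ ^ 3 - 3 * δ ^ 2 - 2 * δ - 1 := by
    linear_combination (-3 * δ ^ 2) * he1 + 2 * δ * he2 - he3
  -- the coefficients c_i as cubic polynomials in the roots
  have hC1 : c₁ = (86 * α ^ 3 - 61 * α ^ 2 - 71 * α - 87) / 563 := by
    rw [hc₁, div_eq_div_iff (mul_ne_zero (mul_ne_zero dαβ dαγ) dαδ) n563]
    linear_combination (-(86 * α ^ 3 - 61 * α ^ 2 - 71 * α - 87)) * hD1
      + (-(344 * α ^ 2 - 158 * α - 87)) * hα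
  have hC2 : c₂ = (86 * β ^ 3 - 61 * β ^ 2 - 71 * β - 87) / 563 := by
    rw [hc₂, div_eq_div_iff (mul_ne_zero (mul_ne_zero dβα dβγ) dβδ) n563]
    linear_combination (-(86 * β ^ 3 - 61 * β ^ 2 - 71 * β - 87)) * hD2
      + (-(344 * β ^ 2 - 158 * β - 87)) * hβ
  have hC3 : c₃ = (86 * γ ^ 3 - 61 * γ ^ 2 - 71 * γ - 87) / 563 := by
    rw [hc₃, div_eq_div_iff (mul_ne_zero (mul_ne_zero dγα dγβ) dγδ) n563]
    linear_combination (-(86 * γ ^ 3 - 61 * γ ^ 2 - 71 * γ - 87)) * hD3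
      + (-(344 * γ ^ 2 - 158 * γ - 87)) * hγ
  have hC4 : c₄ = (86 * δ ^ 3 - 61 * δ ^ 2 - 71 * δ - 87) / 563 := by
    rw [hc₄, div_eq_div_iff (mul_ne_zero (mul_ne_zero dδα dδβ) dδγ) n563]
    linear_combination (-(86 * δ ^ 3 - 61 * δ ^ 2 - 71 * δ - 87)) * hD4
      + (-(344 * δ ^ 2 - 158 * δ - 87)) * hδ
  -- fifth powers of the coefficients
  have hC5a : c₁ ^ 5 = (12866722617 * α ^ 3 + 6363786613 * α ^ 2 + 7772713818 * α
      - 6926089619) / 563 ^ 5 := by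
    rw [hC1, div_pow]
    have ht : (86 * α ^ 3 - 61 * α ^ 2 - 71 * α - 87) ^ 5
        = 12866722617 * α ^ 3 + 6363786613 * α ^ 2 + 7772713818 * α - 6926089619 := by
      linear_combination (4704270176 * α ^ 11 - 11979478704 * α ^ 10 - 3026354448 * α ^ 9
        + 4211238024 * α ^ 8 + 40819254398 * α ^ 7 - 4579527711 * α ^ 6
        - 30666174712 * α ^ 5 - 51280856086 * α ^ 4 + 15329638889 * α ^ 3
        + 28921720975 * α ^ 2 + 30052459385 * α - 1941880412) * hα
    rw [ht]
  have hC5b : c₂ ^ 5 = (12866722617 * β ^ 3 + 6363786613 * β ^ 2 + 7772713818 * β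
      - 6926089619) / 563 ^ 5 := by
    rw [hC2, div_pow]
    have ht : (86 * β ^ 3 - 61 * β ^ 2 - 71 * β - 87) ^ 5
        = 12866722617 * β ^ 3 + 6363786613 * β ^ 2 + 7772713818 * β - 6926089619 := by
      linear_combination (4704270176 * β ^ 11 - 11979478704 * β ^ 10 - 3026354448 * β ^ 9
        + 4211238024 * β ^ 8 + 40819254398 * β ^ 7 - 4579527711 * β ^ 6
        - 30666174712 * β ^ 5 - 51280856086 * β ^ 4 + 15329638889 * β ^ 3
        + 28921720975 * β ^ 2 + 30052459385 * β - 1941880412) * hβ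
    rw [ht]
  have hC5c : c₃ ^ 5 = (12866722617 * γ ^ 3 + 6363786613 * γ ^ 2 + 7772713818 * γ
      - 6926089619) / 563 ^ 5 := by
    rw [hC3, div_pow]
    have ht : (86 * γ ^ 3 - 61 * γ ^ 2 - 71 * γ - 87) ^ 5
        = 12866722617 * γ ^ 3 + 6363786613 * γ ^ 2 + 7772713818 * γ - 6926089619 := by
      linear_combination (4704270176 * γ ^ 11 - 11979478704 * γ ^ 10 - 3026354448 * γ ^ 9
        + 4211238024 * γ ^ 8 + 40819254398 * γ ^ 7 - 4579527711 * γ ^ 6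
        - 30666174712 * γ ^ 5 - 51280856086 * γ ^ 4 + 15329638889 * γ ^ 3
        + 28921720975 * γ ^ 2 + 30052459385 * γ - 1941880412) * hγ
    rw [ht]
  have hC5d : c₄ ^ 5 = (12866722617 * δ ^ 3 + 6363786613 * δ ^ 2 + 7772713818 * δ
      - 6926089619) / 563 ^ 5 := by
    rw [hC4, div_pow]
    have ht : (86 * δ ^ 3 - 61 * δ ^ 2 - 71 * δ - 87) ^ 5
        = 12866722617 * δ ^ 3 + 6363786613 * δ ^ 2 + 7772713818 * δ - 6926089619 := by
      linear_combination (4704270176 * δ ^ 11 - 11979478704 * δ ^ 10 - 3026354448 * δ ^ 9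
        + 4211238024 * δ ^ 8 + 40819254398 * δ ^ 7 - 4579527711 * δ ^ 6
        - 30666174712 * δ ^ 5 - 51280856086 * δ ^ 4 + 15329638889 * δ ^ 3
        + 28921720975 * δ ^ 2 + 30052459385 * δ - 1941880412) * hδ
    rw [ht]
  -- base cases
  have B0 : c₁ ^ 5 * α ^ 0 + c₂ ^ 5 * β ^ 0 + c₃ ^ 5 * γ ^ 0 + c₄ ^ 5 * δ ^ 0
      = (1 / 563 ^ 2 : ℂ) * seqX 0 := by
    have hs : (seqX 0 : ℤ) = 500 := rfl
    rw [hC5a, hC5b, hC5c, hC5d, hs]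
    push_cast
    linear_combination ((7772713818 : ℂ) / 563 ^ 5) * he1
      + ((6363786613 : ℂ) / 563 ^ 5) * hp2 + ((12866722617 : ℂ) / 563 ^ 5) * hp3
  have B1 : c₁ ^ 5 * α ^ 1 + c₂ ^ 5 * β ^ 1 + c₃ ^ 5 * γ ^ 1 + c₄ ^ 5 * δ ^ 1
      = (1 / 563 ^ 2 : ℂ) * seqX 1 := by
    have hs : (seqX 1 : ℤ) = 1423 := rfl
    rw [hC5a, hC5b, hC5c, hC5d, hs]
    push_cast
    linear_combination ((-6926089619 : ℂ) / 563 ^ 5) * he1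
      + ((7772713818 : ℂ) / 563 ^ 5) * hp2 + ((6363786613 : ℂ) / 563 ^ 5) * hp3
      + ((12866722617 : ℂ) / 563 ^ 5) * hp4
  have B2 : c₁ ^ 5 * α ^ 2 + c₂ ^ 5 * β ^ 2 + c₃ ^ 5 * γ ^ 2 + c₄ ^ 5 * δ ^ 2
      = (1 / 563 ^ 2 : ℂ) * seqX 2 := by
    have hs : (seqX 2 : ℤ) = 2598 := rfl
    rw [hC5a, hC5b, hC5c, hC5d, hs]
    push_cast
    linear_combination ((-6926089619 : ℂ) / 563 ^ 5) * hp2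
      + ((7772713818 : ℂ) / 563 ^ 5) * hp3 + ((6363786613 : ℂ) / 563 ^ 5) * hp4
      + ((12866722617 : ℂ) / 563 ^ 5) * hp5
  have B3 : c₁ ^ 5 * α ^ 3 + c₂ ^ 5 * β ^ 3 + c₃ ^ 5 * γ ^ 3 + c₄ ^ 5 * δ ^ 3
      = (1 / 563 ^ 2 : ℂ) * seqX 3 := by
    have hs : (seqX 3 : ℤ) = 4986 := rfl
    rw [hC5a, hC5b, hC5c, hC5d, hs]
    push_cast
    linear_combination ((-6926089619 : ℂ) / 563 ^ 5) * hp3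
      + ((7772713818 : ℂ) / 563 ^ 5) * hp4 + ((6363786613 : ℂ) / 563 ^ 5) * hp5
      + ((12866722617 : ℂ) / 563 ^ 5) * hp6
  -- induction in steps of four
  suffices H : ∀ m : ℕ,
      (c₁ ^ 5 * α ^ m + c₂ ^ 5 * β ^ m + c₃ ^ 5 * γ ^ m + c₄ ^ 5 * δ ^ m
        = (1 / 563 ^ 2 : ℂ) * seqX m) ∧
      (c₁ ^ 5 * α ^ (m + 1) + c₂ ^ 5 * β ^ (m + 1) + c₃ ^ 5 * γ ^ (m + 1) + c₄ ^ 5 * δ ^ (m + 1)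
        = (1 / 563 ^ 2 : ℂ) * seqX (m + 1)) ∧
      (c₁ ^ 5 * α ^ (m + 2) + c₂ ^ 5 * β ^ (m + 2) + c₃ ^ 5 * γ ^ (m + 2) + c₄ ^ 5 * δ ^ (m + 2)
        = (1 / 563 ^ 2 : ℂ) * seqX (m + 2)) ∧
      (c₁ ^ 5 * α ^ (m + 3) + c₂ ^ 5 * β ^ (m + 3) + c₃ ^ 5 * γ ^ (m + 3) + c₄ ^ 5 * δ ^ (m + 3)
        = (1 / 563 ^ 2 : ℂ) * seqX (m + 3)) by
    exact (H n).1
  intro m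
  induction m with
  | zero => exact ⟨B0, B1, B2, B3⟩
  | succ k ih =>
    obtain ⟨h0, h1, h2, h3⟩ := ih
    refine ⟨h1, h2, h3, ?_⟩
    have hs : seqX (k + 4) = seqX (k + 3) + seqX (k + 2) + seqX (k + 1) + seqX k := rfl
    rw [show k + 1 + 3 = k + 4 from rfl, hs]
    push_cast
    linear_combination h0 + h1 + h2 + h3 + (c₁ ^ 5 * α ^ k) * hα + (c₂ ^ 5 * β ^ k) * hβ
      + (c₃ ^ 5 * γ ^ k) * hγ + (c₄ ^ 5 * δ ^ k) * hδ
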